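/- (Orbit process dynamics between events.) Let a be a 1×p real row vector and S a p×p real matrix, and suppose a e^{St} e ≠ 0 for all t in an interval [0, T), where e is the all-ones column vector. Then the orbit A(t) := a e^{St} / (a e^{St} e) satisfies A(t) e = 1 for all t ∈ [0,T), A is differentiable on (0,T), and A'(t) = A(t) S − (A(t) S e) · A(t) for all t ∈ (0,T). -/

import Mathlib

open Matrix

attribute [local instance] Matrix.normedAddCommGroup Matrix.normedSpace

/-- `e^{St}` : the matrix exponential of `t • S`. -/
noncomputable def mexp {p : ℕ} (S : Matrix (Fin p) (Fin p) ℝ) (t : ℝ) :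
    Matrix (Fin p) (Fin p) ℝ := NormedSpace.exp (t • S)

section aux

attribute [-instance] Matrix.normedAddCommGroup Matrix.normedSpace
attribute [local instance] Matrix.linftyOpNormedRing Matrix.linftyOpNormedAlgebra

lemma hasDerivAt_vecMul_mexp {p : ℕ} (a : Fin p → ℝ) (S : Matrix (Fin p) (Fin p) ℝ) (t : ℝ) :
    HasDerivAt (fun u : ℝ => a ᵥ* mexp S u) ((a ᵥ* mexp S t) ᵥ* S) t := by
  have hexp := hasDerivAt_exp_smul_const (𝕂 := ℝ) S t
  let L : Matrix (Fin p) (Fin p) ℝ →ₗ[ℝ] (Fin p → ℝ) :=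
    { toFun := fun M => a ᵥ* M
      map_add' := fun M N => Matrix.vecMul_add M N a
      map_smul' := by
        intro c M
        ext j
        simp [Matrix.vecMul, dotProduct, Finset.mul_sum, mul_left_comm] }
  have hL := (L.toContinuousLinearMap.hasFDerivAt.comp_hasDerivAt t hexp)
  simp only [mexp, Matrix.vecMul_vecMul]
  exact hL

end aux

lemma hasDerivAt_dot {p : ℕ} {f : ℝ → (Fin p → ℝ)} {f' : Fin p → ℝ} {t : ℝ}
    (hf : HasDerivAt f f' t) :
    HasDerivAt (fun u => f u ⬝ᵥ (fun _ => (1 : ℝ))) (f' ⬝ᵥ (fun _ => (1 : ℝ))) t := by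
  let D : (Fin p → ℝ) →ₗ[ℝ] ℝ :=
    { toFun := fun v => v ⬝ᵥ (fun _ => (1 : ℝ))
      map_add' := fun u v => add_dotProduct u v _
      map_smul' := fun c v => smul_dotProduct c v _ }
  exact D.toContinuousLinearMap.hasFDerivAt.comp_hasDerivAt t hf

/-- orbit process dynamics between events:
with `A(t) = a e^{St}/(a e^{St} e)`, `A(t) e = 1` on `[0,T)`, `A` is differentiable
on `(0,T)` and `A'(t) = A(t) S - (A(t) S e)·A(t)` there. -/
theorem orbit_dynamics
    (p : ℕ) (hp : 1 ≤ p) (a : Fin p → ℝ) (S : Matrix (Fin p) (Fin p) ℝ) (T : ℝ)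
    (hne : ∀ t ∈ Set.Ico (0 : ℝ) T,
      (a ᵥ* mexp S t) ⬝ᵥ (fun _ => (1 : ℝ)) ≠ 0) :
    (∀ t ∈ Set.Ico (0 : ℝ) T,
      ((((a ᵥ* mexp S t) ⬝ᵥ (fun _ => (1 : ℝ)))⁻¹ • (a ᵥ* mexp S t))
        ⬝ᵥ (fun _ => (1 : ℝ))) = 1)
    ∧ ∀ t ∈ Set.Ioo (0 : ℝ) T,
        HasDerivAt
          (fun u : ℝ => (((a ᵥ* mexp S u) ⬝ᵥ (fun _ => (1 : ℝ)))⁻¹ • (a ᵥ* mexp S u)))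
          (((((a ᵥ* mexp S t) ⬝ᵥ (fun _ => (1 : ℝ)))⁻¹ • (a ᵥ* mexp S t)) ᵥ* S)
            - (((((a ᵥ* mexp S t) ⬝ᵥ (fun _ => (1 : ℝ)))⁻¹ • (a ᵥ* mexp S t)) ᵥ* S)
                  ⬝ᵥ (fun _ => (1 : ℝ)))
                • (((a ᵥ* mexp S t) ⬝ᵥ (fun _ => (1 : ℝ)))⁻¹ • (a ᵥ* mexp S t)))
          t := by
  constructor
  · intro t ht
    have h := hne t ht
    rw [smul_dotProduct, smul_eq_mul, inv_mul_cancel₀ h]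
  · intro t ht
    have hgne := hne t ⟨ht.1.le, ht.2⟩
    have hf := hasDerivAt_vecMul_mexp a S t
    have hg := hasDerivAt_dot hf
    have h := (hg.inv hgne).smul hf
    convert h using 1
    iterate 4 on_goal 1 => rfl
    set f := a ᵥ* mexp S t with hfd
    set g := f ⬝ᵥ (fun _ => (1 : ℝ)) with hgd
    set g' := (f ᵥ* S) ⬝ᵥ (fun _ => (1 : ℝ)) with hg'd
    funext i
    simp only [Matrix.smul_vecMul, smul_dotProduct, Pi.add_apply, Pi.sub_apply,
      Pi.smul_apply, smul_eq_mul, Pi.inv_apply]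
    rw [← hfd, ← hgd, ← hg'd]
    field_simp
    ring
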